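/- Let n ≥ 3, let X be a type, let R be a set of elements of the free group F_X on X, and let T be a finite group with a surjective homomorphism π : F_X → T whose kernel is the normal closure of R (so T has presentation ⟨X | R⟩). Let α : T → Equiv.Perm (Fin n) be a homomorphism (an action of T on n points, not necessarily faithful) that is 2-homogeneous: for any two 2-element subsets P and Q of Fin n there exists t ∈ T such that the image of P under α(t) equals Q. Let X₁ be a set of elements of F_X whose images under π generate the stabilizer {t ∈ T : α(t)(0) = 0} of the point 0, and let w ∈ F_X be such that the permutation α(π(w)) moves the point 0 and is an even permutation. Let J be the group presented on the generator type X ⊕ Unit (write z for the extra generator and regard each word v ∈ F_X as a word in the larger free group via the inclusion induced by the left injection) with relators: all elements of R, together with z³, (z · z^w)², and, for each u ∈ X₁, the relator z^u · z^{-ε(u)}, where ε(u) = +1 if the permutation α(π(u)) is even and ε(u) = -1 if it is odd (so the relation says z^u = z when α(π(u)) is even and z^u = z⁻¹ otherwise). Then J is isomorphic to the direct product A_{n+2} × T. -/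

import Mathlib

open Equiv

/-- The inclusion of `FreeGroup X` into `FreeGroup (X ⊕ Unit)` induced by `Sum.inl`. -/
def inclFree (X : Type*) : FreeGroup X →* FreeGroup (X ⊕ Unit) :=
  FreeGroup.map Sum.inl

/-- The extra generator `z` of `FreeGroup (X ⊕ Unit)`. -/
def zGen (X : Type*) : FreeGroup (X ⊕ Unit) :=
  FreeGroup.of (Sum.inr ())

/-- The relators of the presentation of Lemma `using Carmichael`: the relators `R` of `T`,
together with `z³`, `(z·z^w)²`, and `z^u = z^{sign u}` for each `u ∈ X₁`. -/
def carmichaelRels {X : Type*} (n : ℕ) (R : Set (FreeGroup X)) (X₁ : Set (FreeGroup X))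
    (w : FreeGroup X) {T : Type*} [Group T] (π : FreeGroup X →* T)
    (α : T →* Equiv.Perm (Fin n)) : Set (FreeGroup (X ⊕ Unit)) :=
  (inclFree X '' R) ∪
    {zGen X ^ 3, (zGen X * ((inclFree X w)⁻¹ * zGen X * inclFree X w)) ^ 2} ∪
    (⋃ u ∈ X₁, {((inclFree X u)⁻¹ * zGen X * inclFree X u) *
      (zGen X ^ (if Equiv.Perm.sign (α (π u)) = 1 then (1 : ℤ) else -1))⁻¹})


set_option linter.unusedSectionVars false
set_option linter.unusedVariables false
set_option linter.unreachableTactic false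
set_option linter.unusedTactic false

open Equiv Equiv.Perm

section C3
variable {β : Type*} [DecidableEq β] [Fintype β]

/-- the 3-cycle a → b → c → a -/
def c3 (a b c : β) : Perm β := Equiv.swap a c * Equiv.swap a b

lemma c3_isThreeCycle {a b c : β} (hab : a ≠ b) (hac : a ≠ c) (hbc : b ≠ c) :
    IsThreeCycle (c3 a b c) :=
  isThreeCycle_swap_mul_swap_same hac hab (Ne.symm hbc)

lemma c3_inv (a b c : β) : (c3 a b c)⁻¹ = c3 a c b := by
  simp [c3, mul_inv_rev]

lemma c3_cube {a b c : β} (hab : a ≠ b) (hac : a ≠ c) (hbc : b ≠ c) :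
    (c3 a b c) ^ 3 = 1 := by
  have := (c3_isThreeCycle hab hac hbc).orderOf
  rw [← this]; exact pow_orderOf_eq_one _

lemma c3_sign {a b c : β} (hab : a ≠ b) (hac : a ≠ c) (hbc : b ≠ c) :
    Perm.sign (c3 a b c) = 1 :=
  (c3_isThreeCycle hab hac hbc).sign

lemma c3_conj (σ : Perm β) (a b c : β) :
    σ * c3 a b c * σ⁻¹ = c3 (σ a) (σ b) (σ c) := by
  rw [show σ * c3 a b c * σ⁻¹ = (σ * Equiv.swap a c * σ⁻¹) * (σ * Equiv.swap a b * σ⁻¹) by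
    rw [c3]; group, ← Equiv.swap_apply_apply, ← Equiv.swap_apply_apply, c3]

lemma c3_conj' (σ : Perm β) (a b c : β) :
    σ⁻¹ * c3 a b c * σ = c3 (σ⁻¹ a) (σ⁻¹ b) (σ⁻¹ c) := by
  simpa using c3_conj σ⁻¹ a b c

lemma c3_apply_a {a b c : β} (hab : a ≠ b) (hac : a ≠ c) (hbc : b ≠ c) : c3 a b c a = b := by
  rw [c3, Perm.mul_apply, Equiv.swap_apply_left,
    Equiv.swap_apply_of_ne_of_ne (Ne.symm hab) hbc]

lemma c3_apply_b {a b c : β} (hab : a ≠ b) (hac : a ≠ c) (hbc : b ≠ c) : c3 a b c b = c := by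
  rw [c3, Perm.mul_apply, Equiv.swap_apply_right, Equiv.swap_apply_left]

lemma c3_apply_c {a b c : β} (hab : a ≠ b) (hac : a ≠ c) (hbc : b ≠ c) : c3 a b c c = a := by
  rw [c3, Perm.mul_apply, Equiv.swap_apply_of_ne_of_ne (Ne.symm hac) (Ne.symm hbc),
    Equiv.swap_apply_right]

lemma c3_apply_other {a b c x : β} (hxa : x ≠ a) (hxb : x ≠ b) (hxc : x ≠ c) :
    c3 a b c x = x := by
  rw [c3, Perm.mul_apply, Equiv.swap_apply_of_ne_of_ne hxa hxb,
    Equiv.swap_apply_of_ne_of_ne hxa hxc]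

lemma c3_rot {a b c : β} (hab : a ≠ b) (hac : a ≠ c) (hbc : b ≠ c) :
    c3 a b c = c3 b c a := by
  ext x
  rcases eq_or_ne x a with rfl | hxa
  · rw [c3_apply_a hab hac hbc, c3_apply_c hbc (Ne.symm hab) (Ne.symm hac)]
  rcases eq_or_ne x b with rfl | hxb
  · rw [c3_apply_b hab hac hbc, c3_apply_a hbc (Ne.symm hab) (Ne.symm hac)]
  rcases eq_or_ne x c with rfl | hxc
  · rw [c3_apply_c hab hac hbc, c3_apply_b hbc (Ne.symm hab) (Ne.symm hac)]
  · rw [c3_apply_other hxa hxb hxc, c3_apply_other hxb hxc hxa]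


lemma c3_apply_def {a b c : β} (hab : a ≠ b) (hac : a ≠ c) (hbc : b ≠ c) (x : β) :
    c3 a b c x = if x = a then b else if x = b then c else if x = c then a else x := by
  rcases eq_or_ne x a with rfl | hxa
  · simp [c3_apply_a hab hac hbc]
  rcases eq_or_ne x b with rfl | hxb
  · simp [c3_apply_b hab hac hbc, hxa]
  rcases eq_or_ne x c with rfl | hxc
  · simp [c3_apply_c hab hac hbc, hxa, hxb]
  · simp [c3_apply_other hxa hxb hxc, hxa, hxb, hxc]

lemma c3_key_rel {a b c d : β} (hab : a ≠ b) (hac : a ≠ c) (hbc : b ≠ c)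
    (hda : d ≠ a) (hdb : d ≠ b) (hdc : d ≠ c) :
    (c3 a b c * c3 d b c) ^ 2 = 1 := by
  ext x
  simp only [pow_two, Perm.mul_apply, Perm.one_apply,
    c3_apply_def hab hac hbc, c3_apply_def hdb hdc hbc]
  rcases eq_or_ne x a with rfl | hxa
  · simp [hab, hac, hbc, hda, hdb, hdc, hab.symm, hac.symm, hbc.symm, hda.symm, hdb.symm, hdc.symm]
  rcases eq_or_ne x b with rfl | hxb
  · simp [hab, hac, hbc, hda, hdb, hdc, hab.symm, hac.symm, hbc.symm, hda.symm, hdb.symm, hdc.symm]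
  rcases eq_or_ne x c with rfl | hxc
  · simp [hab, hac, hbc, hda, hdb, hdc, hab.symm, hac.symm, hbc.symm, hda.symm, hdb.symm, hdc.symm]
  rcases eq_or_ne x d with rfl | hxd
  · simp [hab, hac, hbc, hda, hdb, hdc, hab.symm, hac.symm, hbc.symm, hda.symm, hdb.symm, hdc.symm]
  · simp [hxa, hxb, hxc, hxd]

lemma c3_prod_left {a b p q : β} (hab : a ≠ b) (hap : a ≠ p) (haq : a ≠ q)
    (hbp : b ≠ p) (hbq : b ≠ q) (hpq : p ≠ q) :
    (c3 b p q)⁻¹ * c3 a p q = c3 a b q := by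
  rw [c3_inv]
  ext x
  simp only [Perm.mul_apply, c3_apply_def hbq hbp hpq.symm, c3_apply_def hap haq hpq,
    c3_apply_def hab haq hbq]
  rcases eq_or_ne x a with rfl | hxa
  · simp [hab, hap, haq, hbp, hbq, hpq, hab.symm, hap.symm, haq.symm, hbp.symm, hbq.symm, hpq.symm]
  rcases eq_or_ne x b with rfl | hxb
  · simp [hab, hap, haq, hbp, hbq, hpq, hab.symm, hap.symm, haq.symm, hbp.symm, hbq.symm, hpq.symm]
  rcases eq_or_ne x p with rfl | hxp
  · simp [hab, hap, haq, hbp, hbq, hpq, hab.symm, hap.symm, haq.symm, hbp.symm, hbq.symm, hpq.symm]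
  rcases eq_or_ne x q with rfl | hxq
  · simp [hab, hap, haq, hbp, hbq, hpq, hab.symm, hap.symm, haq.symm, hbp.symm, hbq.symm, hpq.symm]
  · simp [hxa, hxb, hxp, hxq]

lemma c3_prod_right {a b p q : β} (hab : a ≠ b) (hap : a ≠ p) (haq : a ≠ q)
    (hbp : b ≠ p) (hbq : b ≠ q) (hpq : p ≠ q) :
    c3 b p q * (c3 a p q)⁻¹ = c3 a b p := by
  rw [c3_inv]
  ext x
  simp only [Perm.mul_apply, c3_apply_def hbp hbq hpq, c3_apply_def haq hap hpq.symm,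
    c3_apply_def hab hap hbp]
  rcases eq_or_ne x a with rfl | hxa
  · simp [hab, hap, haq, hbp, hbq, hpq, hab.symm, hap.symm, haq.symm, hbp.symm, hbq.symm, hpq.symm]
  rcases eq_or_ne x b with rfl | hxb
  · simp [hab, hap, haq, hbp, hbq, hpq, hab.symm, hap.symm, haq.symm, hbp.symm, hbq.symm, hpq.symm]
  rcases eq_or_ne x p with rfl | hxp
  · simp [hab, hap, haq, hbp, hbq, hpq, hab.symm, hap.symm, haq.symm, hbp.symm, hbq.symm, hpq.symm]
  rcases eq_or_ne x q with rfl | hxq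
  · simp [hab, hap, haq, hbp, hbq, hpq, hab.symm, hap.symm, haq.symm, hbp.symm, hbq.symm, hpq.symm]
  · simp [hxa, hxb, hxp, hxq]

lemma c3_split {x y v q : β} (hxy : x ≠ y) (hxv : x ≠ v) (hyv : y ≠ v)
    (hxq : x ≠ q) (hyq : y ≠ q) (hvq : v ≠ q) :
    c3 x y v = c3 v x q * c3 x y q := by
  ext s
  simp only [Perm.mul_apply, c3_apply_def hxy hxv hyv, c3_apply_def hxv.symm hvq hxq,
    c3_apply_def hxy hxq hyq]
  rcases eq_or_ne s x with rfl | hsx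
  · simp [hxy, hxv, hyv, hxq, hyq, hvq, hxy.symm, hxv.symm, hyv.symm, hxq.symm, hyq.symm, hvq.symm]
  rcases eq_or_ne s y with rfl | hsy
  · simp [hxy, hxv, hyv, hxq, hyq, hvq, hxy.symm, hxv.symm, hyv.symm, hxq.symm, hyq.symm, hvq.symm]
  rcases eq_or_ne s v with rfl | hsv
  · simp [hxy, hxv, hyv, hxq, hyq, hvq, hxy.symm, hxv.symm, hyv.symm, hxq.symm, hyq.symm, hvq.symm]
  rcases eq_or_ne s q with rfl | hsq
  · simp [hxy, hxv, hyv, hxq, hyq, hvq, hxy.symm, hxv.symm, hyv.symm, hxq.symm, hyq.symm, hvq.symm]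
  · simp [hsx, hsy, hsv, hsq]
end C3

section GrpIds
variable {G : Type*} [Group G]

lemma expand3 {x : G} (h : x ^ 3 = 1) : x * x * x = 1 := by
  rw [pow_succ, pow_two] at h; exact h

lemma expand2 {x y : G} (h : (x * y) ^ 2 = 1) : x * y * (x * y) = 1 := by
  rw [pow_two] at h; exact h

lemma grp_sq {x : G} (h : x ^ 3 = 1) : x * x = x⁻¹ :=
  eq_inv_of_mul_eq_one_left (expand3 h)

lemma grp_isq {x : G} (h : x ^ 3 = 1) : x⁻¹ * x⁻¹ = x := by
  rw [← mul_inv_rev, grp_sq h, inv_inv]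

lemma grp_A1 {x z : G} (h : (x * z) ^ 2 = 1) : z * x * z = x⁻¹ := by
  have h' : x * (z * x * z) = 1 := by
    have := expand2 h; rw [← this]; group
  exact eq_inv_of_mul_eq_one_right h'

lemma grp_A3 {x z : G} (hz : z ^ 3 = 1) (h : (x * z) ^ 2 = 1) :
    z⁻¹ * x * z = z * x⁻¹ := by
  have e : z * z * x * z = z⁻¹ * x * z := by rw [grp_sq hz]
  rw [← e, show z * z * x * z = z * (z * x * z) by group, grp_A1 h]

lemma grp_A4 {x z : G} (hz : z ^ 3 = 1) (h : (x * z) ^ 2 = 1) :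
    z⁻¹ * x⁻¹ * z = x * z⁻¹ := by
  have e : z⁻¹ * x⁻¹ * z = (z⁻¹ * x * z)⁻¹ := by group
  rw [e, grp_A3 hz h, mul_inv_rev, inv_inv]

lemma grp_Ec4 {x z : G} (hx : x ^ 3 = 1) (hz : z ^ 3 = 1) (h : (x * z) ^ 2 = 1) :
    (x⁻¹ * z)⁻¹ * (z * (x⁻¹ * z)) = x⁻¹ := by
  have e1 : (x⁻¹ * z)⁻¹ * (z * (x⁻¹ * z)) = (z⁻¹ * x * z) * (x⁻¹ * z) := by group
  rw [e1, grp_A3 hz h, show z * x⁻¹ * (x⁻¹ * z) = z * (x⁻¹ * x⁻¹) * z by group,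
    grp_isq hx, grp_A1 h]

lemma grp_Ed2 {x z : G} (hz : z ^ 3 = 1) (h : (x * z) ^ 2 = 1) :
    (z ^ 2)⁻¹ * (x * z) = x⁻¹ := by
  rw [pow_two]
  have e1 : (z * z)⁻¹ * (x * z) = z⁻¹ * (z⁻¹ * x * z) := by group
  rw [e1, grp_A3 hz h, show z⁻¹ * (z * x⁻¹) = x⁻¹ by group]

lemma grp_Ed3 {x z : G} (hx : x ^ 3 = 1) (hz : z ^ 3 = 1) (h : (x * z) ^ 2 = 1) :
    (x⁻¹ * z)⁻¹ * (x * z ^ 2) = x := by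
  rw [pow_two]
  have e1 : (x⁻¹ * z)⁻¹ * (x * (z * z)) = z⁻¹ * (x * x) * z * z := by group
  rw [e1, grp_sq hx, show z⁻¹ * x⁻¹ * z * z = (z⁻¹ * x⁻¹ * z) * z by group,
    grp_A4 hz h, show x * z⁻¹ * z = x by group]

lemma grp_Ed5 {x y z : G} (hx : x ^ 3 = 1) (hz : z ^ 3 = 1)
    (hxz : (x * z) ^ 2 = 1) (hyz : (y * z) ^ 2 = 1) (hxy : (x * y) ^ 2 = 1) :
    (x⁻¹ * z)⁻¹ * (y * (x⁻¹ * z)) = y * x⁻¹ := by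
  have w1 : x * y * x = y⁻¹ := by
    have h' : y * (x * y * x) = 1 := by
      have h2 := expand2 hxy
      have e : y * (x * y * x) = y * (x * y * (x * y)) * y⁻¹ := by group
      rw [e, h2, mul_one, mul_inv_cancel]
    exact eq_inv_of_mul_eq_one_right h'
  have w2 : x * y * x⁻¹ = y⁻¹ * x := by
    have e : x * y * x⁻¹ = (x * y * x) * (x⁻¹ * x⁻¹) := by group
    rw [e, w1, grp_isq hx]
  have e1 : (x⁻¹ * z)⁻¹ * (y * (x⁻¹ * z)) = z⁻¹ * (x * y * x⁻¹) * z := by group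
  rw [e1, w2, show z⁻¹ * (y⁻¹ * x) * z = (z⁻¹ * y⁻¹ * z) * (z⁻¹ * x * z) by group,
    grp_A4 hz hyz, grp_A3 hz hxz, show y * z⁻¹ * (z * x⁻¹) = y * x⁻¹ by group]

end GrpIds

section Bound
universe u

theorem carmichael_bound : ∀ (m : ℕ) (G : Type u) [Group G] (g : Fin m → G),
    Subgroup.closure (Set.range g) = ⊤ → (∀ i, g i ^ 3 = 1) →
    (∀ i j : Fin m, i ≠ j → (g i * g j) ^ 2 = 1) →
    Finite G ∧ 2 * Nat.card G ≤ (m + 2).factorial := by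
  intro m
  induction m with
  | zero =>
    intro G _ g hgen h3 h2
    rw [Set.range_eq_empty g, Subgroup.closure_empty] at hgen
    have hsub : ∀ x : G, x = 1 := fun x =>
      Subgroup.mem_bot.mp (hgen ▸ Subgroup.mem_top x)
    haveI : Subsingleton G := ⟨fun x y => by rw [hsub x, hsub y]⟩
    haveI : Finite G := Finite.of_subsingleton
    refine ⟨inferInstance, ?_⟩
    have h1 : Nat.card G = 1 := Nat.card_eq_one_iff_unique.mpr ⟨inferInstance, ⟨1⟩⟩
    simp [h1, Nat.factorial]
  | succ m ih =>
    intro G _ g hgen h3 h2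
    set z := g (Fin.last m) with hzdef
    set a : Fin m → G := fun i => g i.castSucc with hadef
    set H := Subgroup.closure (Set.range a) with hHdef
    have hmem : ∀ i, a i ∈ H := fun i => Subgroup.subset_closure (Set.mem_range_self i)
    set a' : Fin m → H := fun i => ⟨a i, hmem i⟩ with ha'def
    have hgen' : Subgroup.closure (Set.range a') = ⊤ := by
      have hr : Set.range a' = (((↑) : H → G) ⁻¹' (Set.range a)) := by
        ext x
        constructor
        · rintro ⟨i, rfl⟩; exact ⟨i, rfl⟩
        · rintro ⟨i, hi⟩; exact ⟨i, Subtype.ext hi⟩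
      rw [hr]
      exact Subgroup.closure_closure_coe_preimage
    have h3' : ∀ i, a' i ^ 3 = 1 := fun i =>
      Subtype.ext (by simpa using h3 i.castSucc)
    have h2' : ∀ i j : Fin m, i ≠ j → (a' i * a' j) ^ 2 = 1 := fun i j hij =>
      Subtype.ext (by
        simpa using h2 i.castSucc j.castSucc (fun h => hij (Fin.castSucc_injective _ h)))
    obtain ⟨hHfin, hHcard⟩ := ih H a' hgen' h3' h2'
    have hz3 : z ^ 3 = 1 := h3 _
    have ha3 : ∀ i, a i ^ 3 = 1 := fun i => h3 _
    have haz : ∀ i, (a i * z) ^ 2 = 1 := fun i =>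
      h2 _ _ (Fin.castSucc_lt_last i).ne
    set F : (Fin m ⊕ Fin 3) → G ⧸ H :=
      Sum.elim (fun i => ((((a i)⁻¹ * z) : G) : G ⧸ H)) (fun k => ((z ^ (k : ℕ) : G) : G ⧸ H))
      with hFdef
    have mk_congr : ∀ (y x x' : G), ((x : G ⧸ H) = (x' : G ⧸ H)) →
        ((y * x : G) : G ⧸ H) = ((y * x' : G) : G ⧸ H) := by
      intro y x x' h
      rw [QuotientGroup.eq] at h ⊢
      have e : (y * x)⁻¹ * (y * x') = x⁻¹ * x' := by group
      rw [e]; exact h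
    -- one coset-step for each generator and coset
    have step : ∀ j : Fin (m + 1), ∀ x : G, (∃ s, F s = ((x : G) : G ⧸ H)) →
        ∃ s', F s' = ((g j * x : G) : G ⧸ H) := by
      intro j x hx
      obtain ⟨s, hs⟩ := hx
      rcases s with i | k
      · -- x-coset is that of (a i)⁻¹ * z
        have key : ((g j * x : G) : G ⧸ H) = ((g j * ((a i)⁻¹ * z) : G) : G ⧸ H) :=
          (mk_congr (g j) _ _ (by simpa [hFdef] using hs.symm))
        rw [key]
        rcases Fin.eq_castSucc_or_eq_last j with ⟨jj, rfl⟩ | rfl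
        · by_cases hji : jj = i
          · subst hji
            refine ⟨Sum.inr 1, ?_⟩
            have e : g jj.castSucc * ((a jj)⁻¹ * z) = z := by
              rw [show g jj.castSucc = a jj from rfl]; exact mul_inv_cancel_left _ _
            simp only [hFdef, Sum.elim_inr, e]
            norm_num
          · refine ⟨Sum.inl i, ?_⟩
            simp only [hFdef, Sum.elim_inl]
            rw [QuotientGroup.eq]
            have e := grp_Ed5 (ha3 i) hz3 (haz i) (haz jj)
              (h2 i.castSucc jj.castSucc (fun h => hji (Fin.castSucc_injective _ h).symm))
            rw [show g jj.castSucc = a jj from rfl, e]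
            exact Subgroup.mul_mem _ (hmem jj) (Subgroup.inv_mem _ (hmem i))
        · refine ⟨Sum.inl i, ?_⟩
          simp only [hFdef, Sum.elim_inl]
          rw [QuotientGroup.eq, show g (Fin.last m) = z from rfl,
            grp_Ec4 (ha3 i) hz3 (haz i)]
          exact Subgroup.inv_mem _ (hmem i)
      · -- x-coset is that of z ^ k
        have key : ((g j * x : G) : G ⧸ H) = ((g j * z ^ (k : ℕ) : G) : G ⧸ H) :=
          (mk_congr (g j) _ _ (by simpa [hFdef] using hs.symm))
        rw [key]
        rcases Fin.eq_castSucc_or_eq_last j with ⟨jj, rfl⟩ | rfl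
        · rw [show g jj.castSucc = a jj from rfl]
          fin_cases k
          · refine ⟨Sum.inr 0, ?_⟩
            simp only [hFdef, Sum.elim_inr]
            rw [QuotientGroup.eq]
            norm_num
            exact hmem jj
          · refine ⟨Sum.inr 2, ?_⟩
            simp only [hFdef, Sum.elim_inr]
            rw [QuotientGroup.eq]
            norm_num
            rw [grp_Ed2 hz3 (haz jj)]
            exact Subgroup.inv_mem _ (hmem jj)
          · refine ⟨Sum.inl jj, ?_⟩
            simp only [hFdef, Sum.elim_inl]
            rw [QuotientGroup.eq]
            norm_num
            rw [show z⁻¹ * a jj * (a jj * z ^ 2) = ((a jj)⁻¹ * z)⁻¹ * (a jj * z ^ 2) by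
              rw [mul_inv_rev, inv_inv], grp_Ed3 (ha3 jj) hz3 (haz jj)]
            exact hmem jj
        · rw [show g (Fin.last m) = z from rfl]
          fin_cases k
          · refine ⟨Sum.inr 1, ?_⟩
            simp only [hFdef, Sum.elim_inr]
            norm_num
          · refine ⟨Sum.inr 2, ?_⟩
            simp only [hFdef, Sum.elim_inr]
            norm_num
            rw [pow_two]
          · refine ⟨Sum.inr 0, ?_⟩
            simp only [hFdef, Sum.elim_inr]
            norm_num
            rw [show z * z ^ 2 = z ^ 3 from (pow_succ' z 2).symm, hz3]
    -- every coset is hit by F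
    have main : ∀ x : G, ∃ s, F s = ((x : G) : G ⧸ H) := by
      intro x
      have hx : x ∈ Subgroup.closure (Set.range g) := hgen ▸ Subgroup.mem_top x
      have base : ∃ s, F s = (((1 : G)) : G ⧸ H) := ⟨Sum.inr 0, by simp [hFdef]⟩
      have key := Subgroup.closure_induction
        (p := fun y _ => ∀ w : G, (∃ s, F s = ((w : G) : G ⧸ H)) →
          (∃ s, F s = ((y * w : G) : G ⧸ H)) ∧ (∃ s, F s = ((y⁻¹ * w : G) : G ⧸ H)))
        (fun y hy w hw => by
          obtain ⟨j, rfl⟩ := hy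
          refine ⟨step j w hw, ?_⟩
          have h1 := step j w hw
          have h2' := step j _ h1
          have e : g j * (g j * w) = (g j)⁻¹ * w := by
            rw [← mul_assoc, grp_sq (h3 j)]
          rw [e] at h2'
          exact h2')
        (fun w hw => by simpa using And.intro hw hw)
        (fun y y' hy hy' hpy hpy' w hw => by
          constructor
          · have h1 := (hpy' w hw).1
            have h2'' := (hpy _ h1).1
            rw [← mul_assoc] at h2''
            exact h2''
          · have h1 := (hpy w hw).2
            have h2'' := (hpy' _ h1).2
            rw [← mul_assoc, ← mul_inv_rev] at h2''
            exact h2'')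
        (fun y hy hpy w hw => by
          refine ⟨(hpy w hw).2, ?_⟩
          have := (hpy w hw).1
          rwa [← inv_inv y] at this)
        hx
      have := (key 1 base).1
      rwa [mul_one] at this
    have hsurjF : Function.Surjective F := by
      intro q
      refine QuotientGroup.induction_on q ?_
      intro x
      exact main x
    haveI hQfin : Finite (G ⧸ H) := Finite.of_surjective F hsurjF
    haveI hGfin : Finite G := Finite.of_equiv _ (Subgroup.groupEquivQuotientProdSubgroup (s := H)).symm
    refine ⟨hGfin, ?_⟩
    have hQcard : Nat.card (G ⧸ H) ≤ m + 3 := by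
      have := Nat.card_le_card_of_surjective F hsurjF
      simpa [Nat.card_sum] using this
    have hcard : Nat.card G = Nat.card (G ⧸ H) * Nat.card H :=
      Subgroup.card_eq_card_quotient_mul_card_subgroup H
    calc 2 * Nat.card G = Nat.card (G ⧸ H) * (2 * Nat.card H) := by rw [hcard]; ring
    _ ≤ (m + 3) * (m + 2).factorial := Nat.mul_le_mul hQcard hHcard
    _ = (m + 1 + 2).factorial := (Nat.factorial_succ (m + 2)).symm
end Bound

section Gen
open Equiv Equiv.Perm
variable {β : Type*} [DecidableEq β] [Fintype β]

lemma isThreeCycle_exists_c3 {σ : Perm β} (h : IsThreeCycle σ) :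
    ∃ a b c : β, a ≠ b ∧ a ≠ c ∧ b ≠ c ∧ σ = c3 a b c := by
  obtain ⟨a, ha, -⟩ := h.isCycle
  have hcube : σ ^ 3 = 1 := by rw [← h.orderOf]; exact pow_orderOf_eq_one σ
  have h3a : σ (σ (σ a)) = a := by
    have := DFunLike.congr_fun hcube a
    simpa [pow_succ, Perm.mul_apply] using this
  refine ⟨a, σ a, σ (σ a), Ne.symm ha, ?_, ?_, ?_⟩
  · intro hac
    exact ha ((congrArg σ hac).trans h3a)
  · intro hbc
    exact ha (σ.injective hbc).symm
  · -- σ = c3 a (σ a) (σ (σ a))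
    have hab : a ≠ σ a := Ne.symm ha
    have hac : a ≠ σ (σ a) := fun hh => ha ((congrArg σ hh).trans h3a)
    have hbc : σ a ≠ σ (σ a) := fun hh => ha (σ.injective hh).symm
    have hsub : ({a, σ a, σ (σ a)} : Finset β) ⊆ σ.support := by
      intro x hx
      simp only [Finset.mem_insert, Finset.mem_singleton] at hx
      rcases hx with rfl | rfl | rfl
      · exact Perm.mem_support.mpr ha
      · exact Perm.mem_support.mpr (fun hh => hbc hh.symm)
      · exact Perm.mem_support.mpr (fun hh => hac (h3a.symm.trans hh))
    have hcard : ({a, σ a, σ (σ a)} : Finset β).card = 3 := by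
      rw [Finset.card_insert_of_notMem (by simp [hab, hac]),
        Finset.card_insert_of_notMem (by simp [hbc]), Finset.card_singleton]
    have hsupp : σ.support = {a, σ a, σ (σ a)} :=
      (Finset.eq_of_subset_of_card_le hsub (by rw [h.card_support, hcard])).symm
    ext x
    rcases eq_or_ne x a with rfl | hxa
    · rw [c3_apply_a hab hac hbc]
    rcases eq_or_ne x (σ a) with rfl | hxb
    · rw [c3_apply_b hab hac hbc]
    rcases eq_or_ne x (σ (σ a)) with rfl | hxc
    · rw [c3_apply_c hab hac hbc, h3a]
    · rw [c3_apply_other hxa hxb hxc]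
      have : x ∉ σ.support := by
        rw [hsupp]; simp [hxa, hxb, hxc]
      exact Perm.notMem_support.mp this

lemma alternating_le_of_c3 {p q : β} (hpq : p ≠ q)
    (W : Subgroup (Perm β)) (hW : ∀ x, x ≠ p → x ≠ q → c3 x p q ∈ W) :
    alternatingGroup β ≤ W := by
  rw [← closure_three_cycles_eq_alternating]
  rw [Subgroup.closure_le]
  intro σ hσ
  obtain ⟨a, b, c, hab, hac, hbc, rfl⟩ := isThreeCycle_exists_c3 hσ
  -- helper subgroup facts
  have W2 : ∀ x y, x ≠ p → x ≠ q → y ≠ p → y ≠ q → x ≠ y → c3 x y q ∈ W := by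
    intro x y hxp hxq hyp hyq hxy
    rw [← c3_prod_left hxy hxp hxq hyp hyq hpq]
    exact W.mul_mem (W.inv_mem (hW y hyp hyq)) (hW x hxp hxq)
  have W3 : ∀ x y, x ≠ p → x ≠ q → y ≠ p → y ≠ q → x ≠ y → c3 x y p ∈ W := by
    intro x y hxp hxq hyp hyq hxy
    rw [← c3_prod_right hxy hxp hxq hyp hyq hpq]
    exact W.mul_mem (hW y hyp hyq) (W.inv_mem (hW x hxp hxq))
  -- form with q in the last slot (or q absent)
  have core : ∀ x y : β, x ≠ y → x ≠ q → y ≠ q → c3 x y q ∈ W := by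
    intro x y hxy hxq hyq
    rcases eq_or_ne x p with rfl | hxp
    · -- c3 p y q = (c3 y p q)⁻¹  (as c3 p y q = c3 y q p)
      rw [c3_rot hxy hxq hyq, ← c3_inv]
      exact W.inv_mem (hW y hxy.symm hyq)
    rcases eq_or_ne y p with rfl | hyp
    · exact hW x hxp hxq
    · exact W2 x y hxp hxq hyp hyq hxy
  -- q-absent form
  have core2 : ∀ x y v : β, x ≠ y → x ≠ v → y ≠ v → x ≠ q → y ≠ q → v ≠ q →
      c3 x y v ∈ W := by
    intro x y v hxy hxv hyv hxq hyq hvq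
    rcases eq_or_ne x p with rfl | hxp
    · -- rotate p to last : c3 p y v = c3 y v p
      rw [c3_rot hxy hxv hyv]
      exact W3 y v hxy.symm hyq hxv.symm hvq hyv
    rcases eq_or_ne y p with rfl | hyp
    · -- c3 x p v = c3 v x p (rotate twice)
      rw [c3_rot hxy hxv hyv, c3_rot hyv hxy.symm hxv.symm]
      exact W3 v x hyv.symm hvq hxp hxq hxv.symm
    rcases eq_or_ne v p with rfl | hvp
    · exact W3 x y hxp hxq hyp hyq hxy
    · -- no special point at all: split through q
      rw [c3_split hxy hxv hyv hxq hyq hvq]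
      exact W.mul_mem (core v x (fun h => hxv h.symm) hvq hxq) (core x y hxy hxq hyq)
  -- now classify position of q in (a,b,c)
  rcases eq_or_ne a q with rfl | haq
  · rw [c3_rot hab hac hbc]
    exact core b c hbc hab.symm hac.symm
  rcases eq_or_ne b q with rfl | hbq
  · rw [c3_rot hab hac hbc, c3_rot hbc hab.symm hac.symm]
    exact core c a (fun h => hac h.symm) hbc.symm hab
  rcases eq_or_ne c q with rfl | hcq
  · exact core a b hab haq hbq
  · exact core2 a b c hab hac hbc haq hbq hcq

end Gen


open Equiv

section Aux

/-- `ℤˣ →* Perm (Fin 2)`, sending `-1` to the swap. -/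
def u2 : ℤˣ →* Equiv.Perm (Fin 2) :=
  MonoidHom.mk' (fun s => if s = 1 then 1 else Equiv.swap 0 1) (by
    intro a b
    rcases Int.units_eq_one_or a with rfl | rfl <;>
      rcases Int.units_eq_one_or b with rfl | rfl <;>
      norm_num <;> simp [Equiv.swap_mul_self])

lemma u2_sign : ∀ s : ℤˣ, Equiv.Perm.sign (u2 s) = s := by
  intro s
  rcases Int.units_eq_one_or s with rfl | rfl <;> simp [u2]

/-- conjugation-extension `Perm (Fin n ⊕ Fin 2) →* Perm (Fin (n+2))`. -/
def permExt (n : ℕ) : Equiv.Perm (Fin n ⊕ Fin 2) →* Equiv.Perm (Fin (n + 2)) :=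
  MonoidHom.mk' (fun p => finSumFinEquiv.permCongr p) (by
    intro p q; ext x; simp [Equiv.permCongr_apply, Equiv.Perm.mul_apply])

/-- The extension of the action `α` to `n+2` points, twisting the two extra
points by the sign. -/
def bigB {T : Type*} [Group T] {n : ℕ} (α : T →* Equiv.Perm (Fin n)) :
    T →* Equiv.Perm (Fin (n + 2)) :=
  (permExt n).comp ((Equiv.Perm.sumCongrHom (Fin n) (Fin 2)).comp
    (((MonoidHom.id (Equiv.Perm (Fin n))).prod (u2.comp Equiv.Perm.sign)).comp α))

variable {T : Type*} [Group T] {n : ℕ} (α : T →* Equiv.Perm (Fin n))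

lemma bigB_castAdd (t : T) (x : Fin n) :
    bigB α t (Fin.castAdd 2 x) = Fin.castAdd 2 (α t x) := by
  simp [bigB, permExt, Equiv.permCongr_apply, Equiv.Perm.sumCongrHom,
    finSumFinEquiv_symm_apply_castAdd, finSumFinEquiv_apply_left]

lemma bigB_natAdd (t : T) (k : Fin 2) :
    bigB α t (Fin.natAdd n k) = Fin.natAdd n (u2 (Equiv.Perm.sign (α t)) k) := by
  simp [bigB, permExt, Equiv.permCongr_apply, Equiv.Perm.sumCongrHom,
    finSumFinEquiv_symm_apply_natAdd, finSumFinEquiv_apply_right]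

lemma bigB_natAdd_even (t : T) (k : Fin 2) (h : Equiv.Perm.sign (α t) = 1) :
    bigB α t (Fin.natAdd n k) = Fin.natAdd n k := by
  rw [bigB_natAdd, h]; simp [u2]

lemma bigB_natAdd_odd (t : T) (h : Equiv.Perm.sign (α t) ≠ 1) :
    bigB α t (Fin.natAdd n 0) = Fin.natAdd n 1 ∧
    bigB α t (Fin.natAdd n 1) = Fin.natAdd n 0 := by
  constructor <;> rw [bigB_natAdd] <;> simp [u2, h] <;> decide

lemma bigB_sign (t : T) : Equiv.Perm.sign (bigB α t) = 1 := by
  have : Equiv.Perm.sign (bigB α t)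
      = Equiv.Perm.sign (α t) * Equiv.Perm.sign (u2 (Equiv.Perm.sign (α t))) := by
    simp [bigB, permExt, Equiv.Perm.sign_permCongr, Equiv.Perm.sumCongrHom,
      Equiv.Perm.sign_sumCongr]
  rw [this, u2_sign, Int.units_mul_self]

end Aux

section GroupAux
variable {G : Type*} [Group G]

lemma conj_zpow' (g x : G) (k : ℤ) : g⁻¹ * x ^ k * g = (g⁻¹ * x * g) ^ k := by
  have h := map_zpow (MulAut.conj g⁻¹) x k
  simpa [MulAut.conj_apply, mul_assoc] using h

lemma sq_flip {x y : G} (h : (x * y) ^ 2 = 1) : (y * x) ^ 2 = 1 := by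
  rw [pow_two] at h ⊢
  have e : y * x * (y * x) = y * (x * y * (x * y)) * y⁻¹ := by group
  rw [e, h, mul_one, mul_inv_cancel]

lemma sq_inv_flip {x y : G} (h : (x⁻¹ * y⁻¹) ^ 2 = 1) : (y * x) ^ 2 = 1 := by
  rw [pow_two] at h ⊢
  have e : x⁻¹ * y⁻¹ * (x⁻¹ * y⁻¹) = (y * x * (y * x))⁻¹ := by group
  rw [e, inv_eq_one] at h
  exact h

end GroupAux



set_option maxHeartbeats 2000000 in
/-- Let `T = ⟨X ∣ R⟩` be a finite group acting 2-homogeneously on `n ≥ 3` points via `α`,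
let the images of `X₁` generate the stabilizer of the point `0`, and let `w` be a word whose
image moves `0` and is even.  Then the group presented on `X ⊕ Unit` with the relators `R`,
`z³`, `(z·z^w)²` and `z^u = z^{sign u}` (`u ∈ X₁`) is isomorphic to `A_{n+2} × T`. -/
theorem using_Carmichael
    (n : ℕ) (hn : 3 ≤ n) (X : Type*) (R : Set (FreeGroup X))
    (T : Type*) [Group T] [Finite T]
    (π : FreeGroup X →* T) (hπ : Function.Surjective π)
    (hker : π.ker = Subgroup.normalClosure R)
    (α : T →* Equiv.Perm (Fin n))
    (h2hom : ∀ P Q : Finset (Fin n), P.card = 2 → Q.card = 2 →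
      ∃ t : T, P.image (α t) = Q)
    (X₁ : Set (FreeGroup X))
    (hX₁ : (Subgroup.closure (⇑π '' X₁) : Set T) = {t : T | α t ⟨0, by omega⟩ = ⟨0, by omega⟩})
    (w : FreeGroup X) (hw : α (π w) ⟨0, by omega⟩ ≠ ⟨0, by omega⟩)
    (hwsign : Equiv.Perm.sign (α (π w)) = 1) :
    Nonempty (PresentedGroup (carmichaelRels n R X₁ w π α) ≃*
      ↥(alternatingGroup (Fin (n + 2))) × T) := by
  classical
  have h0 : 0 < n := by omega
  set pt0 : Fin n := ⟨0, h0⟩ with hpt0_def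
  set p0 : Fin (n + 2) := Fin.castAdd 2 pt0 with hp0_def
  set pn : Fin (n + 2) := Fin.natAdd n 0 with hpn_def
  set pn1 : Fin (n + 2) := Fin.natAdd n 1 with hpn1_def
  set rels := carmichaelRels n R X₁ w π α with hrels_def
  -- membership facts for the relators
  have mem1 : ∀ r ∈ R, inclFree X r ∈ rels := fun r hr =>
    Or.inl (Or.inl ⟨r, hr, rfl⟩)
  have mem2 : zGen X ^ 3 ∈ rels := Or.inl (Or.inr (Or.inl rfl))
  have mem3 : (zGen X * ((inclFree X w)⁻¹ * zGen X * inclFree X w)) ^ 2 ∈ rels :=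
    Or.inl (Or.inr (Or.inr rfl))
  have mem4 : ∀ u ∈ X₁, ((inclFree X u)⁻¹ * zGen X * inclFree X u) *
      (zGen X ^ (if Equiv.Perm.sign (α (π u)) = 1 then (1 : ℤ) else -1))⁻¹ ∈ rels :=
    fun u hu => Or.inr (Set.mem_biUnion hu rfl)
  -- distinctness of the marked points
  have hcast_pn : ∀ x : Fin n, Fin.castAdd 2 x ≠ pn := by
    intro x h
    have h' := congrArg Fin.val h
    simp only [hpn_def, Fin.coe_castAdd, Fin.coe_natAdd] at h'
    omega
  have hcast_pn1 : ∀ x : Fin n, Fin.castAdd 2 x ≠ pn1 := by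
    intro x h
    have h' := congrArg Fin.val h
    simp only [hpn1_def, Fin.coe_castAdd, Fin.coe_natAdd] at h'
    omega
  have hpnpn1 : pn ≠ pn1 := by
    intro h
    have h' := congrArg Fin.val h
    simp only [hpn_def, hpn1_def, Fin.coe_natAdd] at h'
    omega
  have hcast_inj : Function.Injective (Fin.castAdd (n := n) 2) := by
    intro x y h
    have h' := congrArg Fin.val h
    simp only [Fin.coe_castAdd] at h'
    exact Fin.ext h'
  -- transitivity of the action
  have htrans : ∀ x y : Fin n, ∃ t : T, α t x = y := by
    intro x y
    rcases eq_or_ne x y with rfl | hxy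
    · exact ⟨1, by simp⟩
    have hcompl : ((({x, y} : Finset (Fin n)))ᶜ).Nonempty := by
      rw [← Finset.card_pos, Finset.card_compl, Finset.card_pair hxy, Fintype.card_fin]
      omega
    obtain ⟨u, hu⟩ := hcompl
    simp only [Finset.mem_compl, Finset.mem_insert, Finset.mem_singleton, not_or] at hu
    obtain ⟨hux, huy⟩ := hu
    obtain ⟨t, ht⟩ := h2hom {x, u} {y, u}
      (Finset.card_pair (fun h => hux h.symm)) (Finset.card_pair (fun h => huy h.symm))
    have hxmem : α t x ∈ ({y, u} : Finset (Fin n)) := by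
      rw [← ht]; exact Finset.mem_image_of_mem _ (by simp)
    rcases Finset.mem_insert.mp hxmem with h1 | h1
    · exact ⟨t, h1⟩
    · have h1' : α t x = u := by simpa using h1
      have humem : α t u ∈ ({y, u} : Finset (Fin n)) := by
        rw [← ht]; exact Finset.mem_image_of_mem _ (by simp)
      have hneq : α t u ≠ u := fun hh =>
        hux ((α t).injective (hh.trans h1'.symm))
      have h2' : α t u = y := by
        rcases Finset.mem_insert.mp humem with h2 | h2
        · exact h2
        · exact absurd (by simpa using h2) hneq
      exact ⟨t * t, by rw [map_mul, Equiv.Perm.mul_apply, h1', h2']⟩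
  -- sign facts
  have hsgninv : ∀ t : T, Equiv.Perm.sign (α t⁻¹) = Equiv.Perm.sign (α t) := by
    intro t
    rw [map_inv, map_inv, Int.units_inv_eq_self]
  -- conjugation of the 3-cycle by bigB
  have hconjB : ∀ t : T,
      (bigB α t)⁻¹ * c3 p0 pn pn1 * bigB α t
        = if Equiv.Perm.sign (α t) = 1
            then c3 (Fin.castAdd 2 ((α t)⁻¹ pt0)) pn pn1
            else c3 (Fin.castAdd 2 ((α t)⁻¹ pt0)) pn1 pn := by
    intro t
    have hBi : (bigB α t)⁻¹ = bigB α t⁻¹ := by rw [map_inv]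
    rw [hBi, show bigB α t = ((bigB α t⁻¹)⁻¹) from by rw [← map_inv, inv_inv], c3_conj]
    have h1 : bigB α t⁻¹ p0 = Fin.castAdd 2 ((α t)⁻¹ pt0) := by
      rw [hp0_def, bigB_castAdd, map_inv]
    by_cases hs : Equiv.Perm.sign (α t) = 1
    · have hs' : Equiv.Perm.sign (α t⁻¹) = 1 := by rw [hsgninv]; exact hs
      rw [if_pos hs, h1, hpn_def, hpn1_def, bigB_natAdd_even α t⁻¹ _ hs',
        bigB_natAdd_even α t⁻¹ _ hs']
    · have hs' : Equiv.Perm.sign (α t⁻¹) ≠ 1 := by rw [hsgninv]; exact hs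
      rw [if_neg hs, h1, hpn_def, hpn1_def, (bigB_natAdd_odd α t⁻¹ hs').1,
        (bigB_natAdd_odd α t⁻¹ hs').2]
  -- target of the presentation map
  have hζmem : c3 p0 pn pn1 ∈ alternatingGroup (Fin (n + 2)) :=
    Equiv.Perm.mem_alternatingGroup.mpr
      (c3_sign (hcast_pn pt0) (hcast_pn1 pt0) hpnpn1)
  have hBmem : ∀ t : T, bigB α t ∈ alternatingGroup (Fin (n + 2)) :=
    fun t => Equiv.Perm.mem_alternatingGroup.mpr (bigB_sign α t)
  set B : T →* ↥(alternatingGroup (Fin (n + 2))) :=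
    (bigB α).codRestrict _ hBmem with hB_def
  have hBcoe : ∀ t : T, ((B t : Equiv.Perm (Fin (n + 2)))) = bigB α t := fun t => rfl
  set ζ : ↥(alternatingGroup (Fin (n + 2))) := ⟨c3 p0 pn pn1, hζmem⟩ with hζ_def
  set f : (X ⊕ Unit) → ↥(alternatingGroup (Fin (n + 2))) × T :=
    Sum.elim (fun x => (B (π (FreeGroup.of x)), π (FreeGroup.of x))) (fun _ => (ζ, 1))
    with hf_def
  have hlift_incl : ∀ v : FreeGroup X, FreeGroup.lift f (inclFree X v) = (B (π v), π v) := by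
    intro v
    have heq : (FreeGroup.lift f).comp (inclFree X) = (B.comp π).prod π := by
      refine FreeGroup.ext_hom _ _ ?_
      intro x
      simp [inclFree, hf_def, MonoidHom.prod_apply]
    have h := DFunLike.congr_fun heq v
    simpa [MonoidHom.prod_apply] using h
  have hlift_z : FreeGroup.lift f (zGen X) = (ζ, 1) := by
    simp [zGen, hf_def]
  -- the subgroup conjugation identity, at the level of the pair group
  have hζcoe_mul : ∀ t : T,
      ((((B t)⁻¹ * ζ * B t) : ↥(alternatingGroup (Fin (n + 2)))) : Equiv.Perm (Fin (n + 2)))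
        = (bigB α t)⁻¹ * c3 p0 pn pn1 * bigB α t := by
    intro t
    push_cast
    try rw [hBcoe]
    try rfl
  have hconjζ : ∀ t : T, α t pt0 = pt0 →
      (B t)⁻¹ * ζ * B t = ζ ^ (if Equiv.Perm.sign (α t) = 1 then (1 : ℤ) else -1) := by
    intro t ht
    have hfix : (α t)⁻¹ pt0 = pt0 := by
      rw [Equiv.Perm.inv_eq_iff_eq, ht]
    have h := hconjB t
    by_cases hs : Equiv.Perm.sign (α t) = 1
    · rw [if_pos hs] at h ⊢
      rw [zpow_one]
      apply Subtype.ext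
      rw [hζcoe_mul, h, hfix, ← hp0_def]
    · rw [if_neg hs] at h ⊢
      apply Subtype.ext
      rw [hζcoe_mul, h, hfix, ← hp0_def, ← c3_inv]
      rw [zpow_neg_one]
      push_cast
      rfl
  -- the relators are killed
  have hrelone : ∀ r ∈ rels, FreeGroup.lift f r = 1 := by
    intro r hr
    rcases hr with (hr | hr) | hr
    · obtain ⟨r₀, hr₀, rfl⟩ := hr
      rw [hlift_incl]
      have hone : π r₀ = 1 := by
        have : r₀ ∈ π.ker := by
          rw [hker]; exact Subgroup.subset_normalClosure hr₀
        exact this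
      rw [hone, map_one]
      rfl
    · rcases hr with rfl | rfl
      · rw [map_pow, hlift_z]
        have hz3 : ζ ^ 3 = 1 := by
          apply Subtype.ext
          push_cast
          exact c3_cube (hcast_pn pt0) (hcast_pn1 pt0) hpnpn1
        rw [Prod.pow_mk, hz3, one_pow]
        rfl
      · rw [map_pow, map_mul, map_mul, map_mul, map_inv, hlift_z, hlift_incl]
        rw [Prod.inv_mk, Prod.mk_mul_mk, Prod.mk_mul_mk, Prod.mk_mul_mk, Prod.pow_mk,
          Prod.mk_eq_one]
        constructor
        · apply Subtype.ext
          push_cast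
          rw [hBcoe, hconjB (π w), if_pos hwsign]
          have hkne : Fin.castAdd 2 ((α (π w))⁻¹ pt0) ≠ p0 := by
            rw [hp0_def]
            intro hcontr
            have hceq := hcast_inj hcontr
            have happ := congrArg (α (π w)) hceq
            rw [Equiv.Perm.inv_def, Equiv.apply_symm_apply] at happ
            exact hw happ.symm
          rw [hp0_def] at hkne
          exact c3_key_rel (hcast_pn pt0) (hcast_pn1 pt0) hpnpn1
            hkne (hcast_pn _) (hcast_pn1 _)
        · simp
    · simp only [Set.mem_iUnion] at hr
      obtain ⟨u, hu, hru⟩ := hr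
      rw [Set.mem_singleton_iff] at hru
      subst hru
      rw [map_mul, map_inv, map_zpow, map_mul, map_mul, map_inv, hlift_z, hlift_incl]
      have hufix : α (π u) pt0 = pt0 := by
        have humem : π u ∈ Subgroup.closure (⇑π '' X₁) :=
          Subgroup.subset_closure ⟨u, hu, rfl⟩
        have : π u ∈ {t : T | α t pt0 = pt0} := by
          rw [← hX₁]
          exact humem
        exact this
      have hfsteq := hconjζ (π u) hufix
      have hzp : ((ζ, (1 : T))) ^ (if Equiv.Perm.sign (α (π u)) = 1 then (1 : ℤ) else -1)
          = (ζ ^ (if Equiv.Perm.sign (α (π u)) = 1 then (1 : ℤ) else -1),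
             (1 : T) ^ (if Equiv.Perm.sign (α (π u)) = 1 then (1 : ℤ) else -1)) := rfl
      rw [hzp, Prod.inv_mk, Prod.inv_mk, Prod.mk_mul_mk, Prod.mk_mul_mk, Prod.mk_mul_mk,
        Prod.mk_eq_one]
      constructor
      · rw [hfsteq]
        simp
      · simp
  -- the homomorphism φ
  set φ : PresentedGroup rels →* ↥(alternatingGroup (Fin (n + 2))) × T :=
    PresentedGroup.toGroup hrelone with hφ_def
  have hφmk : ∀ v : FreeGroup (X ⊕ Unit),
      φ (PresentedGroup.mk rels v) = FreeGroup.lift f v := fun v => rfl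
  -- surjectivity of φ
  have hIm1 : ∀ t : T, (B t, t) ∈ φ.range := by
    intro t
    obtain ⟨v, rfl⟩ := hπ t
    exact ⟨PresentedGroup.mk rels (inclFree X v), by rw [hφmk, hlift_incl]⟩
  have hImζ : ((ζ, (1 : T))) ∈ φ.range :=
    ⟨PresentedGroup.mk rels (zGen X), by rw [hφmk, hlift_z]⟩
  -- subgroup of the alternating group coming from the range
  set WA : Subgroup ↥(alternatingGroup (Fin (n + 2))) :=
    φ.range.comap (MonoidHom.inl _ T) with hWA_def
  set W : Subgroup (Equiv.Perm (Fin (n + 2))) :=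
    WA.map (alternatingGroup (Fin (n + 2))).subtype with hW_def
  have hWz : ∀ i : Fin n, c3 (Fin.castAdd 2 i) pn pn1 ∈ W := by
    intro i
    obtain ⟨t, ht⟩ := htrans i pt0
    have hfix : (α t)⁻¹ pt0 = i := by
      rw [Equiv.Perm.inv_eq_iff_eq, ht]
    have hconjmem : ((B t)⁻¹ * ζ * B t, (1 : T)) ∈ φ.range := by
      have h1 : ((B t)⁻¹ * ζ * B t, t⁻¹ * 1 * t) ∈ φ.range := by
        have := mul_mem (mul_mem (inv_mem (hIm1 t)) hImζ) (hIm1 t)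
        simpa [Prod.mk_mul_mk, Prod.inv_mk] using this
      simpa using h1
    have hWA1 : (B t)⁻¹ * ζ * B t ∈ WA := hconjmem
    by_cases hs : Equiv.Perm.sign (α t) = 1
    · have : ((((B t)⁻¹ * ζ * B t : ↥(alternatingGroup (Fin (n + 2)))))
          : Equiv.Perm (Fin (n + 2))) = c3 (Fin.castAdd 2 i) pn pn1 := by
        rw [hζcoe_mul, hconjB t, if_pos hs, hfix]
      exact this ▸ ⟨_, hWA1, rfl⟩
    · have hco : ((((B t)⁻¹ * ζ * B t : ↥(alternatingGroup (Fin (n + 2)))))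
          : Equiv.Perm (Fin (n + 2))) = (c3 (Fin.castAdd 2 i) pn pn1)⁻¹ := by
        rw [hζcoe_mul, hconjB t, if_neg hs, hfix, ← c3_inv]
      have hmemW : (c3 (Fin.castAdd 2 i) pn pn1)⁻¹ ∈ W := hco ▸ ⟨_, hWA1, rfl⟩
      have := W.inv_mem hmemW
      rwa [inv_inv] at this
  have hWall : ∀ x : Fin (n + 2), x ≠ pn → x ≠ pn1 → c3 x pn pn1 ∈ W := by
    intro x hxpn hxpn1
    have hxval : (x : ℕ) < n := by
      have h1 : (x : ℕ) < n + 2 := x.2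
      have h2 : (x : ℕ) ≠ n := fun h => hxpn (by
        apply Fin.ext
        simp [hpn_def, Fin.coe_natAdd, h])
      have h3 : (x : ℕ) ≠ n + 1 := fun h => hxpn1 (by
        apply Fin.ext
        simp [hpn1_def, Fin.coe_natAdd, h])
      omega
    have hx : x = Fin.castAdd 2 ⟨(x : ℕ), hxval⟩ := by
      apply Fin.ext
      simp [Fin.coe_castAdd]
    rw [hx]
    exact hWz _
  have hAW : alternatingGroup (Fin (n + 2)) ≤ W :=
    alternating_le_of_c3 hpnpn1 W hWall
  have htopA : ∀ aa : ↥(alternatingGroup (Fin (n + 2))), (aa, (1 : T)) ∈ φ.range := by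
    intro aa
    have hmem : (aa : Equiv.Perm (Fin (n + 2))) ∈ W := hAW aa.2
    obtain ⟨bb, hbbWA, hbb⟩ := hmem
    have hb : bb = aa := Subtype.ext hbb
    subst hb
    exact hbbWA
  have hφsurj : Function.Surjective φ := by
    rintro ⟨aa, t⟩
    have h1 := hIm1 t
    have h2 := htopA (aa * (B t)⁻¹)
    have h3 := mul_mem h2 h1
    rw [Prod.mk_mul_mk, one_mul, inv_mul_cancel_right] at h3
    exact h3
  --------------------------------------------------------------------
  -- The cardinality bound.
  --------------------------------------------------------------------
  set κ : FreeGroup X →* PresentedGroup rels :=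
    (PresentedGroup.mk rels).comp (inclFree X) with hκ_def
  have hκapp : ∀ v : FreeGroup X, κ v = PresentedGroup.mk rels (inclFree X v) :=
    fun v => rfl
  set zJ : PresentedGroup rels := PresentedGroup.mk rels (zGen X) with hzJ_def
  have hmkone : ∀ r ∈ rels, PresentedGroup.mk rels r = 1 := fun r hr =>
    (QuotientGroup.eq_one_iff r).mpr (Subgroup.subset_normalClosure hr)
  have hκker : ∀ v ∈ π.ker, κ v = 1 := by
    intro v hv
    have hle : Subgroup.normalClosure R ≤ κ.ker := by
      apply Subgroup.normalClosure_le_normal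
      intro r hr
      rw [SetLike.mem_coe, MonoidHom.mem_ker, hκapp]
      exact hmkone _ (mem1 r hr)
    exact hle (hker ▸ hv)
  set e : (FreeGroup X ⧸ π.ker) ≃* T := QuotientGroup.quotientKerEquivOfSurjective π hπ
    with he_def
  set θ : T →* PresentedGroup rels :=
    (QuotientGroup.lift π.ker κ hκker).comp e.symm.toMonoidHom with hθ_def
  have hθπ : ∀ v : FreeGroup X, θ (π v) = κ v := by
    intro v
    have h1 : e (QuotientGroup.mk v) = π v := QuotientGroup.kerLift_mk π v
    have h2 : e.symm (π v) = QuotientGroup.mk v := by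
      rw [← h1, MulEquiv.symm_apply_apply]
    show (QuotientGroup.lift π.ker κ hκker) (e.symm (π v)) = κ v
    rw [h2]
    exact QuotientGroup.lift_mk' _ _ v
  -- the sign exponent
  set εf : T → ℤ := fun t => ((Equiv.Perm.sign (α t) : ℤˣ) : ℤ) with hεf_def
  have hεif : ∀ t : T, (if Equiv.Perm.sign (α t) = 1 then (1 : ℤ) else -1) = εf t := by
    intro t
    rcases Int.units_eq_one_or (Equiv.Perm.sign (α t)) with h | h <;>
      simp [hεf_def, h]
  have hεmul : ∀ s t : T, εf (s * t) = εf s * εf t := by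
    intro s t
    simp [hεf_def, map_mul, Units.val_mul]
  have hεinv : ∀ t : T, εf t⁻¹ = εf t := by
    intro t
    simp [hεf_def, map_inv, Int.units_inv_eq_self]
  have hεone : εf 1 = 1 := by simp [hεf_def]
  have hεsq : ∀ t : T, εf t * εf t = 1 := by
    intro t
    rw [hεf_def]
    rw [show ((Equiv.Perm.sign (α t) : ℤˣ) : ℤ) * ((Equiv.Perm.sign (α t) : ℤˣ) : ℤ)
      = (((Equiv.Perm.sign (α t) * Equiv.Perm.sign (α t) : ℤˣ)) : ℤ) by push_cast; ring]
    rw [Int.units_mul_self]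
    rfl
  have hεw : εf (π w) = 1 := by simp [hεf_def, hwsign]
  -- relations in the presented group
  have hzJ3 : zJ ^ 3 = 1 := by
    have h := hmkone _ mem2
    rwa [map_pow] at h
  have hbase0 : (zJ * ((κ w)⁻¹ * zJ * κ w)) ^ 2 = 1 := by
    have h := hmkone _ mem3
    rwa [map_pow, map_mul, map_mul, map_mul, map_inv] at h
  have hrelu : ∀ u ∈ X₁, (κ u)⁻¹ * zJ * κ u = zJ ^ εf (π u) := by
    intro u hu
    have h := hmkone _ (mem4 u hu)
    rw [map_mul, map_mul, map_mul, map_inv, map_inv, map_zpow] at h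
    rw [hεif (π u)] at h
    exact mul_inv_eq_one.mp h
  -- L1 : conjugation by stabilizer elements
  have L1 : ∀ t : T, α t pt0 = pt0 → (θ t)⁻¹ * zJ * θ t = zJ ^ εf t := by
    intro t ht
    have htmem : t ∈ Subgroup.closure (⇑π '' X₁) := by
      rw [← SetLike.mem_coe, hX₁]
      exact ht
    refine Subgroup.closure_induction
      (p := fun s _ => (θ s)⁻¹ * zJ * θ s = zJ ^ εf s) ?_ ?_ ?_ ?_ htmem
    · rintro s ⟨u, hu, rfl⟩
      rw [hθπ]
      exact hrelu u hu
    · show (θ 1)⁻¹ * zJ * θ 1 = zJ ^ εf 1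
      rw [map_one, hεone, zpow_one, inv_one, one_mul, mul_one]
    · intro s t' _ _ ps pt'
      show (θ (s * t'))⁻¹ * zJ * θ (s * t') = zJ ^ εf (s * t')
      rw [map_mul]
      have e1 : (θ s * θ t')⁻¹ * zJ * (θ s * θ t')
          = (θ t')⁻¹ * ((θ s)⁻¹ * zJ * θ s) * θ t' := by group
      rw [e1, ps, show (θ t')⁻¹ * zJ ^ εf s * θ t' = ((θ t')⁻¹ * zJ * θ t') ^ εf s
        from conj_zpow' _ _ _, pt', ← zpow_mul]
      congr 1
      rw [hεmul]
      ring
    · intro s _ ps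
      show (θ s⁻¹)⁻¹ * zJ * θ s⁻¹ = zJ ^ εf s⁻¹
      have ps' : (θ s)⁻¹ * zJ * θ s = zJ ^ εf s := ps
      have h3 : (θ s)⁻¹ * zJ ^ εf s * θ s = zJ := by
        rw [conj_zpow', ps', ← zpow_mul, hεsq, zpow_one]
      have h4 : zJ ^ εf s = θ s * zJ * (θ s)⁻¹ := by
        generalize hZ : zJ ^ εf s = Z at h3 ⊢
        rw [← h3]
        group
      rw [map_inv, inv_inv, hεinv, h4]
  -- choice of coset representatives
  have hchoice : ∀ i : Fin n, ∃ t : T, α t i = pt0 := fun i => htrans i pt0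
  choose tt htt using hchoice
  have hαinv : ∀ i : Fin n, (α (tt i))⁻¹ pt0 = i := by
    intro i
    rw [Equiv.Perm.inv_eq_iff_eq, htt i]
  set yy : Fin n → PresentedGroup rels :=
    fun i => (θ (tt i))⁻¹ * zJ * θ (tt i) with hyy_def
  set y : Fin n → PresentedGroup rels := fun i => yy i ^ εf (tt i) with hy_def
  -- L2 : every conjugate of z is a power of some y i
  have L2 : ∀ t : T, (θ t)⁻¹ * zJ * θ t = y ((α t)⁻¹ pt0) ^ εf t := by
    intro t
    set i : Fin n := (α t)⁻¹ pt0 with hi_def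
    have hs0 : α (t * (tt i)⁻¹) pt0 = pt0 := by
      rw [map_mul, map_inv, Equiv.Perm.mul_apply, hαinv i, hi_def,
        Equiv.Perm.inv_def, Equiv.apply_symm_apply]
    have hts : t = (t * (tt i)⁻¹) * tt i := by group
    have hstep : (θ t)⁻¹ * zJ * θ t
        = (θ (tt i))⁻¹ * ((θ (t * (tt i)⁻¹))⁻¹ * zJ * θ (t * (tt i)⁻¹)) * θ (tt i) := by
      conv_lhs => rw [hts]
      rw [map_mul]
      group
    rw [hstep, L1 _ hs0, conj_zpow']
    have : (θ (tt i))⁻¹ * zJ * θ (tt i) = yy i := rfl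
    rw [this]
    rw [hy_def]
    rw [← zpow_mul]
    congr 1
    rw [hεmul, hεinv]
    have h1 : εf (tt i) * εf t = εf t * εf (tt i) := by ring
    rw [← h1]
  -- conjugation of the y's
  have Lconj : ∀ (t : T) (i : Fin n),
      (θ t)⁻¹ * y i * θ t = y ((α t)⁻¹ i) ^ εf t := by
    intro t i
    have h1 : (θ t)⁻¹ * y i * θ t = ((θ t)⁻¹ * yy i * θ t) ^ εf (tt i) :=
      conj_zpow' _ _ _
    have h2 : (θ t)⁻¹ * yy i * θ t = (θ (tt i * t))⁻¹ * zJ * θ (tt i * t) := by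
      rw [map_mul, hyy_def]
      group
    have h3 : (α (tt i * t))⁻¹ pt0 = (α t)⁻¹ i := by
      rw [map_mul, mul_inv_rev, Equiv.Perm.mul_apply, hαinv]
    rw [h1, h2, L2 (tt i * t), h3, ← zpow_mul]
    rw [show εf (tt i * t) * εf (tt i) = (εf (tt i) * εf (tt i)) * εf t from by
      rw [hεmul]; ring, hεsq, one_mul]
  -- z itself is y pt0
  have hzy : zJ = y pt0 := by
    have h := L2 1
    rw [map_one, inv_one, one_mul, mul_one, map_one, hεone, zpow_one] at h
    exact h
  -- the basic Carmichael relation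
  set kk : Fin n := (α (π w))⁻¹ pt0 with hkk_def
  have hkkne : kk ≠ pt0 := by
    intro h
    have happ := congrArg (α (π w)) h
    rw [hkk_def, Equiv.Perm.inv_def, Equiv.apply_symm_apply] at happ
    exact hw happ.symm
  have hbase : (y pt0 * y kk) ^ 2 = 1 := by
    have h1 := hbase0
    rw [← hθπ w, L2 (π w), hεw, zpow_one, ← hkk_def] at h1
    rw [← hzy]
    exact h1
  -- cube relations
  have hzpow3 : zJ ^ (3 : ℤ) = 1 := by
    rw [show (3 : ℤ) = ((3 : ℕ) : ℤ) from by norm_num, zpow_natCast, hzJ3]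
  have hyycube : ∀ i : Fin n, yy i ^ (3 : ℤ) = 1 := by
    intro i
    rw [hyy_def, ← conj_zpow', hzpow3, mul_one, inv_mul_cancel]
  have hycube : ∀ i : Fin n, y i ^ 3 = 1 := by
    intro i
    rw [hy_def]
    rw [show (yy i ^ εf (tt i)) ^ (3 : ℕ) = (yy i ^ εf (tt i)) ^ ((3 : ℕ) : ℤ) from
      (zpow_natCast _ 3).symm, ← zpow_mul,
      show εf (tt i) * ((3 : ℕ) : ℤ) = (3 : ℤ) * εf (tt i) from by push_cast; ring,
      zpow_mul, hyycube, one_zpow]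
  -- pairwise relations
  have hεval : ∀ t : T, εf t = 1 ∨ εf t = -1 := by
    intro t
    rcases Int.units_eq_one_or (Equiv.Perm.sign (α t)) with h | h <;>
      simp [hεf_def, h]
  have hypair : ∀ i j : Fin n, i ≠ j → (y i * y j) ^ 2 = 1 := by
    intro i j hij
    obtain ⟨t, himg⟩ := h2hom {i, j} {pt0, kk} (Finset.card_pair hij)
      (Finset.card_pair (Ne.symm hkkne))
    have hmi : α t i ∈ ({pt0, kk} : Finset (Fin n)) := by
      rw [← himg]; exact Finset.mem_image_of_mem _ (by simp)
    have hmj : α t j ∈ ({pt0, kk} : Finset (Fin n)) := by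
      rw [← himg]; exact Finset.mem_image_of_mem _ (by simp)
    have hije : α t i ≠ α t j := fun h => hij ((α t).injective h)
    -- conjugate the base relation by θ t
    have hconjbase : ((y ((α t)⁻¹ pt0) ^ εf t) * (y ((α t)⁻¹ kk) ^ εf t)) ^ 2 = 1 := by
      have h1 : (θ t)⁻¹ * ((y pt0 * y kk) ^ 2) * θ t = 1 := by
        rw [hbase, mul_one, inv_mul_cancel]
      have h2 : (θ t)⁻¹ * ((y pt0 * y kk) ^ 2) * θ t
          = (((θ t)⁻¹ * y pt0 * θ t) * ((θ t)⁻¹ * y kk * θ t)) ^ 2 := by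
        rw [pow_two, pow_two]
        group
      rw [h2] at h1
      rw [← Lconj t pt0, ← Lconj t kk]
      exact h1
    have hipt : (α t)⁻¹ (α t i) = i := Equiv.symm_apply_apply _ _
    have hjpt : (α t)⁻¹ (α t j) = j := Equiv.symm_apply_apply _ _
    -- identify the two indices
    have hcases : ((α t)⁻¹ pt0 = i ∧ (α t)⁻¹ kk = j) ∨
        ((α t)⁻¹ pt0 = j ∧ (α t)⁻¹ kk = i) := by
      rcases Finset.mem_insert.mp hmi with h1 | h1
      · left
        constructor
        · rw [← h1, hipt]
        · have h2 : α t j = kk := by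
            rcases Finset.mem_insert.mp hmj with h2 | h2
            · exact absurd (h2.trans h1.symm) hije.symm
            · simpa using h2
          rw [← h2, hjpt]
      · have h1' : α t i = kk := by simpa using h1
        right
        have h2 : α t j = pt0 := by
          rcases Finset.mem_insert.mp hmj with h2 | h2
          · exact h2
          · exact absurd ((by simpa using h2 : α t j = kk).trans h1'.symm) hije.symm
        constructor
        · rw [← h2, hjpt]
        · rw [← h1', hipt]
    rcases hεval t with hε | hε
    · rw [hε, zpow_one, zpow_one] at hconjbase
      rcases hcases with ⟨ha, hb⟩ | ⟨ha, hb⟩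
      · rw [ha, hb] at hconjbase; exact hconjbase
      · rw [ha, hb] at hconjbase; exact sq_flip hconjbase
    · rw [hε, zpow_neg_one, zpow_neg_one] at hconjbase
      rcases hcases with ⟨ha, hb⟩ | ⟨ha, hb⟩
      · rw [ha, hb] at hconjbase
        exact sq_flip (sq_inv_flip hconjbase)
      · rw [ha, hb] at hconjbase
        exact sq_inv_flip hconjbase
  -- the subgroup generated by the y's
  set K : Subgroup (PresentedGroup rels) := Subgroup.closure (Set.range y) with hK_def
  have hyK : ∀ i : Fin n, y i ∈ K := fun i =>
    Subgroup.subset_closure (Set.mem_range_self i)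
  set y' : Fin n → ↥K := fun i => ⟨y i, hyK i⟩ with hy'_def
  have hgenK : Subgroup.closure (Set.range y') = ⊤ := by
    have hr : Set.range y' = (((↑) : K → PresentedGroup rels) ⁻¹' (Set.range y)) := by
      ext x
      constructor
      · rintro ⟨i, rfl⟩; exact ⟨i, rfl⟩
      · rintro ⟨i, hi⟩; exact ⟨i, Subtype.ext hi⟩
    rw [hr]
    exact Subgroup.closure_closure_coe_preimage
  have h3K : ∀ i, y' i ^ 3 = 1 := fun i => Subtype.ext (by simpa using hycube i)
  have h2K : ∀ i j : Fin n, i ≠ j → (y' i * y' j) ^ 2 = 1 := fun i j hij =>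
    Subtype.ext (by simpa using hypair i j hij)
  obtain ⟨hKfin, hKcard⟩ := carmichael_bound n ↥K y' hgenK h3K h2K
  -- K is closed under conjugation by θ t
  have hconjθK : ∀ t : T, ∀ x ∈ K, (θ t)⁻¹ * x * θ t ∈ K := by
    intro t x hx
    refine Subgroup.closure_induction
      (p := fun x _ => (θ t)⁻¹ * x * θ t ∈ K) ?_ ?_ ?_ ?_ hx
    · rintro s ⟨i, rfl⟩
      rw [Lconj t i]
      exact K.zpow_mem (hyK _) _
    · show (θ t)⁻¹ * 1 * θ t ∈ K
      rw [mul_one, inv_mul_cancel]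
      exact K.one_mem
    · intro a b _ _ pa pb
      have h : (θ t)⁻¹ * (a * b) * θ t
          = ((θ t)⁻¹ * a * θ t) * ((θ t)⁻¹ * b * θ t) := by group
      rw [h]
      exact K.mul_mem pa pb
    · intro a _ pa
      have h : (θ t)⁻¹ * a⁻¹ * θ t = ((θ t)⁻¹ * a * θ t)⁻¹ := by group
      rw [h]
      exact K.inv_mem pa
  have hofθ : ∀ x : X, (PresentedGroup.of (rels := rels) (Sum.inl x))
      = θ (π (FreeGroup.of x)) := by
    intro x
    rw [hθπ]
    rfl
  have hKnormal : K.Normal := by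
    rw [← Subgroup.normalizer_eq_top_iff]
    rw [eq_top_iff]
    intro j _
    refine PresentedGroup.generated_by rels (Subgroup.normalizer (K : Set (PresentedGroup rels))) ?_ j
    rintro (x | u)
    · rw [hofθ x]
      rw [Subgroup.mem_normalizer_iff]
      intro m
      constructor
      · intro hm
        have h := hconjθK (π (FreeGroup.of x))⁻¹ m hm
        rw [map_inv, inv_inv] at h
        exact h
      · intro hm
        have h := hconjθK (π (FreeGroup.of x)) _ hm
        have e : (θ (π (FreeGroup.of x)))⁻¹ *
            (θ (π (FreeGroup.of x)) * m * (θ (π (FreeGroup.of x)))⁻¹) *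
            θ (π (FreeGroup.of x)) = m := by group
        rwa [e] at h
    · have hz : (PresentedGroup.of (rels := rels) (Sum.inr u)) = zJ := by
        cases u
        rfl
      rw [hz]
      exact Subgroup.le_normalizer (hzy ▸ hyK pt0)
  haveI := hKnormal
  -- the quotient map ψ to T
  set fψ : (X ⊕ Unit) → T := Sum.elim (fun x => π (FreeGroup.of x)) (fun _ => 1)
    with hfψ_def
  have hliftψ_incl : ∀ v : FreeGroup X, FreeGroup.lift fψ (inclFree X v) = π v := by
    intro v
    have heq : (FreeGroup.lift fψ).comp (inclFree X) = π := by
      refine FreeGroup.ext_hom _ _ ?_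
      intro x
      simp [inclFree, hfψ_def]
    exact DFunLike.congr_fun heq v
  have hliftψ_z : FreeGroup.lift fψ (zGen X) = 1 := by simp [zGen, hfψ_def]
  have hrelψ : ∀ r ∈ rels, FreeGroup.lift fψ r = 1 := by
    intro r hr
    rcases hr with (hr | hr) | hr
    · obtain ⟨r₀, hr₀, rfl⟩ := hr
      rw [hliftψ_incl]
      have : r₀ ∈ π.ker := by
        rw [hker]; exact Subgroup.subset_normalClosure hr₀
      exact this
    · rcases hr with rfl | rfl
      · rw [map_pow, hliftψ_z, one_pow]
      · rw [map_pow, map_mul, map_mul, map_mul, map_inv, hliftψ_z, hliftψ_incl]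
        simp
    · simp only [Set.mem_iUnion] at hr
      obtain ⟨u, hu, hru⟩ := hr
      rw [Set.mem_singleton_iff] at hru
      subst hru
      rw [map_mul, map_inv, map_zpow, map_mul, map_mul, map_inv, hliftψ_z, hliftψ_incl]
      simp
  set ψ : PresentedGroup rels →* T := PresentedGroup.toGroup hrelψ with hψ_def
  have hψmk : ∀ v : FreeGroup (X ⊕ Unit),
      ψ (PresentedGroup.mk rels v) = FreeGroup.lift fψ v := fun v => rfl
  have hψθ : ∀ t : T, ψ (θ t) = t := by
    intro t
    obtain ⟨v, rfl⟩ := hπ t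
    rw [hθπ, hκapp, hψmk, hliftψ_incl]
  have hψsurj : Function.Surjective ψ := fun t => ⟨θ t, hψθ t⟩
  -- the kernel of ψ is contained in K
  have hkerle : ψ.ker ≤ K := by
    set Q : PresentedGroup rels →* (PresentedGroup rels ⧸ K) := QuotientGroup.mk' K
      with hQ_def
    have hQκ : ∀ v ∈ π.ker, (Q.comp κ) v = 1 := by
      intro v hv
      rw [MonoidHom.comp_apply, hκker v hv, map_one]
    set τ : T →* (PresentedGroup rels ⧸ K) :=
      (QuotientGroup.lift π.ker (Q.comp κ) hQκ).comp e.symm.toMonoidHom with hτ_def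
    have hτπ : ∀ v : FreeGroup X, τ (π v) = Q (κ v) := by
      intro v
      have h1 : e (QuotientGroup.mk v) = π v := QuotientGroup.kerLift_mk π v
      have h2 : e.symm (π v) = QuotientGroup.mk v := by
        rw [← h1, MulEquiv.symm_apply_apply]
      show (QuotientGroup.lift π.ker (Q.comp κ) hQκ) (e.symm (π v)) = Q (κ v)
      rw [h2]
      exact QuotientGroup.lift_mk' _ _ v
    have hτψ : τ.comp ψ = Q := by
      refine PresentedGroup.ext ?_
      rintro (x | u)
      · rw [MonoidHom.comp_apply]
        have h1 : ψ (PresentedGroup.of (rels := rels) (Sum.inl x)) = π (FreeGroup.of x) := by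
          rw [show (PresentedGroup.of (rels := rels) (Sum.inl x))
            = PresentedGroup.mk rels (FreeGroup.of (Sum.inl x)) from rfl, hψmk]
          simp [hfψ_def]
        rw [h1, hτπ]
        rfl
      · rw [MonoidHom.comp_apply]
        have h1 : ψ (PresentedGroup.of (rels := rels) (Sum.inr u)) = 1 := by
          rw [show (PresentedGroup.of (rels := rels) (Sum.inr u))
            = PresentedGroup.mk rels (FreeGroup.of (Sum.inr u)) from rfl, hψmk]
          simp [hfψ_def]
        rw [h1, map_one]
        have hz : (PresentedGroup.of (rels := rels) (Sum.inr u)) = zJ := by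
          cases u; rfl
        rw [hz]
        symm
        rw [hQ_def]
        rw [QuotientGroup.mk'_apply]
        rw [QuotientGroup.eq_one_iff]
        exact hzy ▸ hyK pt0
    intro j hj
    have h1 : Q j = 1 := by
      rw [← hτψ]
      rw [MonoidHom.comp_apply]
      rw [MonoidHom.mem_ker.mp hj, map_one]
    have h2 : j ∈ K := by
      rwa [hQ_def, QuotientGroup.mk'_apply, QuotientGroup.eq_one_iff] at h1
    exact h2
  -- counting
  haveI hkerfin : Finite ↥ψ.ker :=
    Finite.of_injective (Subgroup.inclusion hkerle) (Subgroup.inclusion_injective _)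
  have hcker : Nat.card ↥ψ.ker ≤ Nat.card ↥K := Subgroup.card_le_of_le hkerle
  set eT : (PresentedGroup rels ⧸ ψ.ker) ≃* T :=
    QuotientGroup.quotientKerEquivOfSurjective ψ hψsurj with heT_def
  haveI : Finite (PresentedGroup rels ⧸ ψ.ker) := Finite.of_equiv T eT.symm.toEquiv
  haveI hJfin : Finite (PresentedGroup rels) :=
    Finite.of_equiv _ (Subgroup.groupEquivQuotientProdSubgroup (s := ψ.ker)).symm
  have hJcard : Nat.card (PresentedGroup rels)
      = Nat.card (PresentedGroup rels ⧸ ψ.ker) * Nat.card ↥ψ.ker :=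
    Subgroup.card_eq_card_quotient_mul_card_subgroup _
  have hQT : Nat.card (PresentedGroup rels ⧸ ψ.ker) = Nat.card T :=
    Nat.card_congr eT.toEquiv
  haveI : Nontrivial (Fin (n + 2)) := ⟨⟨pn, pn1, hpnpn1⟩⟩
  have hA2 : 2 * Nat.card ↥(alternatingGroup (Fin (n + 2))) = (n + 2).factorial := by
    rw [Nat.card_eq_fintype_card, two_mul_card_alternatingGroup, Fintype.card_perm,
      Fintype.card_fin]
  have hbound : 2 * Nat.card (PresentedGroup rels)
      ≤ 2 * Nat.card (↥(alternatingGroup (Fin (n + 2))) × T) := by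
    rw [hJcard, hQT, Nat.card_prod]
    calc 2 * (Nat.card T * Nat.card ↥ψ.ker)
        = Nat.card T * (2 * Nat.card ↥ψ.ker) := by ring
      _ ≤ Nat.card T * (n + 2).factorial := by
          apply Nat.mul_le_mul_left
          calc 2 * Nat.card ↥ψ.ker ≤ 2 * Nat.card ↥K := by omega
            _ ≤ (n + 2).factorial := hKcard
      _ = 2 * (Nat.card ↥(alternatingGroup (Fin (n + 2))) * Nat.card T) := by
          rw [← hA2]; ring
  have hle : Nat.card (PresentedGroup rels)
      ≤ Nat.card (↥(alternatingGroup (Fin (n + 2))) × T) := by omega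
  have hge : Nat.card (↥(alternatingGroup (Fin (n + 2))) × T)
      ≤ Nat.card (PresentedGroup rels) :=
    Nat.card_le_card_of_surjective φ hφsurj
  have hbij : Function.Bijective φ :=
    (Nat.bijective_iff_surjective_and_card φ).mpr
      ⟨hφsurj, le_antisymm hle hge⟩
  exact ⟨MulEquiv.ofBijective φ hbij⟩
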